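/- Let V be a nonzero finite-dimensional real inner product space and let P : V → V be a linear map with P² = P, P ≠ 0, and P ≠ id. Then the operator norms of P and of its complementary projection agree: ‖P‖ = ‖id − P‖. -/

import Mathlib

set_option maxHeartbeats 1000000 in
lemma aux_complement_le {V : Type*}
    [NormedAddCommGroup V] [InnerProductSpace ℝ V]
    (P : V →L[ℝ] V) (hidem : P.comp P = P) (h0 : P ≠ 0) :
    ‖ContinuousLinearMap.id ℝ V - P‖ ≤ ‖P‖ := by
  -- ‖P‖ ≥ 1
  obtain ⟨x0, hx0⟩ : ∃ x, P x ≠ 0 := by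
    by_contra h
    push_neg at h
    exact h0 (ContinuousLinearMap.ext fun x => h x)
  have hPP : ∀ x, P (P x) = P x := fun x => DFunLike.congr_fun hidem x
  have hP1 : 1 ≤ ‖P‖ := by
    have h1 : ‖P x0‖ ≤ ‖P‖ * ‖P x0‖ := by
      conv_lhs => rw [← hPP x0]
      exact P.le_opNorm _
    have hx0' : 0 < ‖P x0‖ := norm_pos_iff.mpr hx0
    nlinarith
  apply ContinuousLinearMap.opNorm_le_bound _ (le_trans zero_le_one hP1)
  intro x
  set a := P x with ha
  set b := x - P x with hb
  have hx : x = a + b := by simp [ha, hb]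
  have hQx : (ContinuousLinearMap.id ℝ V - P) x = b := by simp [hb]
  rw [hQx]
  by_cases hbz : b = 0
  · simp [hbz]
    positivity
  by_cases haz : a = 0
  · have : b = x := by rw [hb, ← ha, haz, sub_zero]
    rw [this]
    nlinarith [norm_nonneg x]
  -- main case
  have hPa : P a = a := hPP x
  have hPb : P b = 0 := by
    rw [hb]
    simp [hPP x]
  set t : ℝ := -(inner ℝ a b / ‖b‖ ^ 2) with ht
  set d : V := a + t • b with hd
  have hPd : P d = a := by
    rw [hd, map_add, map_smul, hPa, hPb, smul_zero, add_zero]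
  have hdz : d ≠ 0 := by
    intro h
    rw [h, map_zero] at hPd
    exact haz hPd.symm
  have hbpos : (0:ℝ) < ‖b‖ := norm_pos_iff.mpr hbz
  have hdpos : (0:ℝ) < ‖d‖ := norm_pos_iff.mpr hdz
  -- ‖a‖ ≤ ‖P‖ * ‖d‖
  have h1 : ‖a‖ ≤ ‖P‖ * ‖d‖ := by
    conv_lhs => rw [← hPd]
    exact P.le_opNorm _
  -- key inequality: ‖b‖ * ‖d‖ ≤ ‖a‖ * ‖x‖
  have hdsq : ‖d‖ ^ 2 = ‖a‖ ^ 2 + 2 * t * inner ℝ a b + t ^ 2 * ‖b‖ ^ 2 := by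
    rw [hd, @norm_add_sq_real, real_inner_smul_right, norm_smul]
    simp [mul_pow, sq_abs]
    ring
  have hxsq : ‖x‖ ^ 2 = ‖a‖ ^ 2 + 2 * inner ℝ a b + ‖b‖ ^ 2 := by
    rw [hx, @norm_add_sq_real]
  have htv : t * ‖b‖ ^ 2 = -(inner ℝ a b : ℝ) := by
    rw [ht]
    field_simp
  have hL : ‖b‖ ^ 2 * ‖d‖ ^ 2 = ‖a‖ ^ 2 * ‖b‖ ^ 2 - (inner ℝ a b : ℝ) ^ 2 := by
    rw [hdsq]
    linear_combination (t * ‖b‖ ^ 2 + (inner ℝ a b : ℝ)) * htv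
  have hR : ‖a‖ ^ 2 * ‖x‖ ^ 2
      = ‖a‖ ^ 4 + 2 * ‖a‖ ^ 2 * inner ℝ a b + ‖a‖ ^ 2 * ‖b‖ ^ 2 := by
    rw [hxsq]
    ring
  have key : ‖b‖ * ‖d‖ ≤ ‖a‖ * ‖x‖ := by
    have hsq : (‖b‖ * ‖d‖) ^ 2 ≤ (‖a‖ * ‖x‖) ^ 2 := by
      rw [mul_pow, mul_pow]
      nlinarith [sq_nonneg (‖a‖ ^ 2 + (inner ℝ a b : ℝ))]
    have hbd : 0 ≤ ‖b‖ * ‖d‖ := by positivity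
    have hax : 0 ≤ ‖a‖ * ‖x‖ := by positivity
    nlinarith
  -- conclude: ‖b‖ ≤ ‖P‖ * ‖x‖
  have h2 : ‖b‖ * ‖d‖ ≤ (‖P‖ * ‖d‖) * ‖x‖ := le_trans key (by nlinarith [norm_nonneg x])
  have hxnn : (0:ℝ) ≤ ‖x‖ := norm_nonneg x
  nlinarith

/-- For a nontrivial idempotent `P` (neither `0` nor the identity) on a nonzero
finite-dimensional real inner product space, `‖P‖ = ‖id − P‖`. -/
theorem norm_idempotent_eq_norm_complement {V : Type*}
    [NormedAddCommGroup V] [InnerProductSpace ℝ V]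
    [FiniteDimensional ℝ V] [Nontrivial V]
    (P : V →L[ℝ] V) (hidem : P.comp P = P)
    (h0 : P ≠ 0) (h1 : P ≠ ContinuousLinearMap.id ℝ V) :
    ‖P‖ = ‖ContinuousLinearMap.id ℝ V - P‖ := by
  set Q := ContinuousLinearMap.id ℝ V - P with hQ
  have hPP : ∀ x, P (P x) = P x := fun x => DFunLike.congr_fun hidem x
  have hQidem : Q.comp Q = Q := by
    ext x
    simp [hQ, hPP x]
  have hQ0 : Q ≠ 0 := by
    rw [hQ, sub_ne_zero]
    exact Ne.symm h1
  have hIQ : ContinuousLinearMap.id ℝ V - Q = P := by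
    rw [hQ, sub_sub_cancel]
  have hle1 : ‖Q‖ ≤ ‖P‖ := aux_complement_le P hidem h0
  have hle2 : ‖P‖ ≤ ‖Q‖ := by
    have := aux_complement_le Q hQidem hQ0
    rwa [hIQ] at this
  exact le_antisymm hle2 hle1
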